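/- The greedy initial-solution algorithm for the Maximal Covering problem returns a feasible solution: starting from empty built sets and cost 0, processing O/D pairs in any order and adding the nodes and edges of Path_w (and setting z^w = 1) only when the incremental cost keeps the total at most C_max, the final (x,y,z) satisfies the budget constraint, x_e ≤ y_i for endpoints, and for each w with z^w = 1 the built subgraph contains a path from w^s to w^t of length at most u^w. -/

import Mathlib

namespace Stmt10

variable {V E W : Type*}

def arcSrc (ends : E → V × V) : E × Bool → V
  | (e, true) => (ends e).1
  | (e, false) => (ends e).2

def arcDst (ends : E → V × V) : E × Bool → V
  | (e, true) => (ends e).2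
  | (e, false) => (ends e).1

def IsWalk (ends : E → V × V) : V → V → List (E × Bool) → Prop
  | s, t, [] => s = t
  | s, t, a :: L => arcSrc ends a = s ∧ IsWalk ends (arcDst ends a) t L

def IsPath (ends : E → V × V) (s t : V) (L : List (E × Bool)) : Prop :=
  IsWalk ends s t L ∧ (s :: L.map (arcDst ends)).Nodup

def walkLen (d : E → ℝ) (L : List (E × Bool)) : ℝ :=
  (L.map fun a => d a.1).sum

/-- Node set of the fixed path of pair `w`. -/
def pNodes [DecidableEq V] (ends : E → V × V) (orig : W → V)
    (P : W → List (E × Bool)) (w : W) : Finset V :=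
  insert (orig w) ((P w).map (arcDst ends)).toFinset

/-- Edge set of the fixed path of pair `w`. -/
def pEdges [DecidableEq E] (P : W → List (E × Bool)) (w : W) : Finset E :=
  ((P w).map Prod.fst).toFinset

/-- One greedy step: add the path of `w` if the incremental cost fits the budget. -/
noncomputable def step [DecidableEq V] [DecidableEq E] [DecidableEq W]
    (ends : E → V × V) (b : V → ℝ) (c : E → ℝ) (Cmax : ℝ) (orig : W → V)
    (P : W → List (E × Bool))
    (st : Finset V × Finset E × Finset W × ℝ) (w : W) :
    Finset V × Finset E × Finset W × ℝ :=
  let inc := (∑ i ∈ pNodes ends orig P w \ st.1, b i)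
      + (∑ e ∈ pEdges P w \ st.2.1, c e)
  if st.2.2.2 + inc ≤ Cmax then
    (st.1 ∪ pNodes ends orig P w, st.2.1 ∪ pEdges P w,
      insert w st.2.2.1, st.2.2.2 + inc)
  else st

lemma walk_src_mem (ends : E → V × V) {s t : V} {L : List (E × Bool)}
    (h : IsWalk ends s t L) :
    ∀ a ∈ L, arcSrc ends a = s ∨ arcSrc ends a ∈ L.map (arcDst ends) := by
  induction L generalizing s with
  | nil => simp
  | cons hd tl ih =>
    rintro a ha
    rcases List.mem_cons.1 ha with rfl | ha
    · exact Or.inl h.1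
    · rcases ih h.2 a ha with h1 | h1
      · right; simp [h1]
      · right; simp only [List.map_cons, List.mem_cons]; exact Or.inr h1

/-- Invariant of the greedy state. -/
def Inv [DecidableEq V] [DecidableEq E] [DecidableEq W]
    (ends : E → V × V) (b : V → ℝ) (c : E → ℝ) (Cmax : ℝ) (orig : W → V)
    (P : W → List (E × Bool)) (st : Finset V × Finset E × Finset W × ℝ) : Prop :=
  st.2.2.2 = (∑ i ∈ st.1, b i) + (∑ e ∈ st.2.1, c e) ∧
  st.2.2.2 ≤ Cmax ∧
  (∀ e ∈ st.2.1, (ends e).1 ∈ st.1 ∧ (ends e).2 ∈ st.1) ∧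
  (∀ w ∈ st.2.2.1, pNodes ends orig P w ⊆ st.1 ∧ pEdges P w ⊆ st.2.1)

lemma endpoints_mem_pNodes [DecidableEq V] [DecidableEq E]
    (ends : E → V × V) (orig : W → V) (P : W → List (E × Bool)) (w : W)
    (hw : IsWalk ends (orig w) t (P w)) {a : E × Bool} (ha : a ∈ P w) :
    (ends a.1).1 ∈ pNodes ends orig P w ∧ (ends a.1).2 ∈ pNodes ends orig P w := by
  have hsrc : arcSrc ends a ∈ pNodes ends orig P w := by
    rcases walk_src_mem ends hw a ha with h | h
    · simp [pNodes, h]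
    · simp only [pNodes, Finset.mem_insert, List.mem_toFinset]
      exact Or.inr h
  have hdst : arcDst ends a ∈ pNodes ends orig P w := by
    simp only [pNodes, Finset.mem_insert, List.mem_toFinset]
    exact Or.inr (List.mem_map_of_mem ha)
  obtain ⟨e, dir⟩ := a
  cases dir
  · exact ⟨hdst, hsrc⟩
  · exact ⟨hsrc, hdst⟩

lemma step_inv [DecidableEq V] [DecidableEq E] [DecidableEq W]
    (ends : E → V × V) (b : V → ℝ) (c : E → ℝ) (Cmax : ℝ)
    (orig dest : W → V) (P : W → List (E × Bool))
    (hP : ∀ w, IsWalk ends (orig w) (dest w) (P w))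
    {st : Finset V × Finset E × Finset W × ℝ}
    (h : Inv ends b c Cmax orig P st) (w : W) :
    Inv ends b c Cmax orig P (step ends b c Cmax orig P st w) := by
  obtain ⟨hcost, hle, hedge, hcov⟩ := h
  unfold step
  set inc := (∑ i ∈ pNodes ends orig P w \ st.1, b i)
      + (∑ e ∈ pEdges P w \ st.2.1, c e) with hinc
  by_cases hfit : st.2.2.2 + inc ≤ Cmax
  · simp only [hfit, if_pos]
    refine ⟨?_, hfit, ?_, ?_⟩
    · have h1 : ∑ i ∈ st.1 ∪ pNodes ends orig P w, b i
          = (∑ i ∈ st.1, b i) + ∑ i ∈ pNodes ends orig P w \ st.1, b i := by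
        rw [← Finset.union_sdiff_self_eq_union,
          Finset.sum_union Finset.disjoint_sdiff]
      have h2 : ∑ e ∈ st.2.1 ∪ pEdges P w, c e
          = (∑ e ∈ st.2.1, c e) + ∑ e ∈ pEdges P w \ st.2.1, c e := by
        rw [← Finset.union_sdiff_self_eq_union,
          Finset.sum_union Finset.disjoint_sdiff]
      simp only [h1, h2, hcost, hinc]; ring
    · intro e he
      rcases Finset.mem_union.1 he with he | he
      · exact ⟨Finset.mem_union_left _ (hedge e he).1,
          Finset.mem_union_left _ (hedge e he).2⟩
      · obtain ⟨a, ha, rfl⟩ := List.mem_map.1 (List.mem_toFinset.1 he)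
        have := endpoints_mem_pNodes ends orig P w (hP w) ha
        exact ⟨Finset.mem_union_right _ this.1, Finset.mem_union_right _ this.2⟩
    · intro w' hw'
      rcases Finset.mem_insert.1 hw' with rfl | hw'
      · exact ⟨Finset.subset_union_right, Finset.subset_union_right⟩
      · exact ⟨(hcov w' hw').1.trans Finset.subset_union_left,
          (hcov w' hw').2.trans Finset.subset_union_left⟩
  · simp only [hfit, if_neg, if_false]
    exact ⟨hcost, hle, hedge, hcov⟩

lemma foldl_inv [DecidableEq V] [DecidableEq E] [DecidableEq W]
    (ends : E → V × V) (b : V → ℝ) (c : E → ℝ) (Cmax : ℝ)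
    (orig dest : W → V) (P : W → List (E × Bool))
    (hP : ∀ w, IsWalk ends (orig w) (dest w) (P w))
    (ord : List W) {st : Finset V × Finset E × Finset W × ℝ}
    (h : Inv ends b c Cmax orig P st) :
    Inv ends b c Cmax orig P (ord.foldl (step ends b c Cmax orig P) st) := by
  induction ord generalizing st with
  | nil => exact h
  | cons hd tl ih =>
    exact ih (step_inv ends b c Cmax orig dest P hP h hd)

/-- processing the O/D pairs in any order, the greedy
initial-solution algorithm for (MC) returns a feasible solution. -/
theorem greedy_MC_feasible [Fintype V] [Fintype E]
    [DecidableEq V] [DecidableEq E] [DecidableEq W]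
    (ends : E → V × V) (b : V → ℝ) (c : E → ℝ) (d : E → ℝ) (Cmax : ℝ)
    (orig dest : W → V) (u : W → ℝ) (P : W → List (E × Bool))
    (hb : ∀ i, 0 ≤ b i) (hc : ∀ e, 0 ≤ c e) (hC : 0 ≤ Cmax)
    (hP : ∀ w, IsPath ends (orig w) (dest w) (P w) ∧ walkLen d (P w) ≤ u w)
    (ord : List W) :
    let fin := ord.foldl (step ends b c Cmax orig P) (∅, ∅, ∅, 0)
    let x : E → ℝ := fun e => if e ∈ fin.2.1 then 1 else 0
    let y : V → ℝ := fun i => if i ∈ fin.1 then 1 else 0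
    let z : W → ℝ := fun w => if w ∈ fin.2.2.1 then 1 else 0
    ((∑ e : E, c e * x e) + (∑ i : V, b i * y i) ≤ Cmax) ∧
    (∀ e : E, x e ≤ y (ends e).1 ∧ x e ≤ y (ends e).2) ∧
    (∀ w : W, z w = 1 →
      ∃ L : List (E × Bool), IsPath ends (orig w) (dest w) L ∧
        (∀ a ∈ L, x a.1 = 1) ∧ walkLen d L ≤ u w) := by
  intro fin x y z
  have hinv : Inv ends b c Cmax orig P fin := by
    refine foldl_inv ends b c Cmax orig dest P (fun w => (hP w).1.1) ord ?_
    refine ⟨by simp, hC, by simp, by simp⟩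
  obtain ⟨hcost, hle, hedge, hcov⟩ := hinv
  refine ⟨?_, ?_, ?_⟩
  · have hx : (∑ e : E, c e * x e) = ∑ e ∈ fin.2.1, c e := by
      simp only [x, mul_ite, mul_one, mul_zero]
      rw [Finset.sum_ite_mem, Finset.univ_inter]
    have hy : (∑ i : V, b i * y i) = ∑ i ∈ fin.1, b i := by
      simp only [y, mul_ite, mul_one, mul_zero]
      rw [Finset.sum_ite_mem, Finset.univ_inter]
    rw [hx, hy, add_comm, ← hcost]; exact hle
  · intro e
    by_cases he : e ∈ fin.2.1
    · have := hedge e he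
      simp [x, y, he, this.1, this.2]
    · simp [x, he, y]
      constructor <;> split <;> norm_num
  · intro w hw
    have hwmem : w ∈ fin.2.2.1 := by
      by_contra hmem
      simp [z, hmem] at hw
    refine ⟨P w, (hP w).1, ?_, (hP w).2⟩
    intro a ha
    have : a.1 ∈ fin.2.1 := (hcov w hwmem).2 (by
      simp only [pEdges, List.mem_toFinset]
      exact List.mem_map_of_mem ha)
    simp [x, this]

end Stmt10
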